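/- arXiv:2103.11914 — 2 statements merged into one kernel-verified Lean document; each statement's English description precedes it below -/
import Mathlib

section
/- Let H ≥ 0 be a selfadjoint operator on a Hilbert space with a unit eigenvector ψ of eigenvalue λ ≥ 0, and let V ≥ 0 be a selfadjoint operator such that ‖√(H+εI) φ‖² ≥ ‖√(V+εI) φ‖² for all φ in the form domain (valid for all ε > 0, with ψ in the appropriate domains). Then for every t > 0, e^{-tλ} ≤ ⟨ψ, e^{-tV} ψ⟩ ≤ 1. -/
open scoped InnerProductSpace

section aux

variable {E : Type*} [NormedAddCommGroup E] [InnerProductSpace ℂ E] [CompleteSpace E]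

lemma gseb_inner_mono {A B : E →L[ℂ] E} (h : A ≤ B) (x : E) :
    (inner ℂ x (A x) : ℂ).re ≤ (inner ℂ x (B x) : ℂ).re := by
  have hp := (ContinuousLinearMap.le_def A B).mp h
  have := hp.inner_nonneg_right x
  simp only [ContinuousLinearMap.sub_apply, inner_sub_right, map_sub,
    RCLike.re_to_complex] at this
  have h2 := (Complex.le_def.mp this).1
  simp only [Complex.zero_re, Complex.sub_re] at h2
  linarith

lemma gseb_norm_sq (A : E →L[ℂ] E) (hA : IsSelfAdjoint A) (x : E) :
    ‖A x‖ ^ 2 = (inner ℂ x ((A * A) x) : ℂ).re := by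
  have h1 : (inner ℂ (A x) (A x) : ℂ) = inner ℂ x ((A * A) x) := by
    have h2 := ContinuousLinearMap.adjoint_inner_left A (A x) x
    rw [hA.adjoint_eq] at h2
    rw [h2]
    simp [ContinuousLinearMap.mul_apply]
  rw [← inner_self_eq_norm_sq (𝕜 := ℂ), h1, RCLike.re_to_complex]

end aux

/-- Jensen-type bound for ground states: if `T ≥ 0` is selfadjoint with unit eigenvector
`ψ` of eigenvalue `λ ≥ 0`, `V ≥ 0` is selfadjoint, and the form inequality
`‖√(V+εI) φ‖² ≤ ‖√(T+εI) φ‖²` holds for all `ε > 0` and all `φ`, then for every `t > 0`,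
`e^{-tλ} ≤ ⟨ψ, e^{-tV} ψ⟩ ≤ 1`. -/
theorem ground_state_exp_bound
    {E : Type*} [NormedAddCommGroup E] [InnerProductSpace ℂ E] [CompleteSpace E]
    (T V : E →L[ℂ] E) (hT : IsSelfAdjoint T) (hV : IsSelfAdjoint V)
    (hTpos : ∀ x : E, 0 ≤ (inner ℂ x (T x) : ℂ).re)
    (hVpos : ∀ x : E, 0 ≤ (inner ℂ x (V x) : ℂ).re)
    (ψ : E) (hψ : ‖ψ‖ = 1) (lam : ℝ) (hlam : 0 ≤ lam)
    (heig : T ψ = ((lam : ℝ) : ℂ) • ψ)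
    (hform : ∀ ε > (0:ℝ), ∀ φ : E,
      ‖cfc (fun s : ℝ => Real.sqrt (s + ε)) V φ‖ ^ 2 ≤
        ‖cfc (fun s : ℝ => Real.sqrt (s + ε)) T φ‖ ^ 2)
    (t : ℝ) (ht : 0 < t) :
    Real.exp (-t * lam) ≤ (inner ℂ ψ ((cfc (fun s : ℝ => Real.exp (-t * s)) V) ψ) : ℂ).re ∧
      (inner ℂ ψ ((cfc (fun s : ℝ => Real.exp (-t * s)) V) ψ) : ℂ).re ≤ 1 := by
  have hψψ : (inner ℂ ψ ψ : ℂ) = 1 := by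
    rw [inner_self_eq_norm_sq_to_K, hψ]; norm_num
  -- positivity of V and T as elements of the C*-order
  have hVnn : (0 : E →L[ℂ] E) ≤ V := by
    rw [ContinuousLinearMap.nonneg_iff_isPositive]
    refine ⟨hV.isSymmetric, fun x => ?_⟩
    rw [ContinuousLinearMap.reApplyInnerSelf_apply, inner_re_symm, RCLike.re_to_complex]
    exact hVpos x
  have hTnn : (0 : E →L[ℂ] E) ≤ T := by
    rw [ContinuousLinearMap.nonneg_iff_isPositive]
    refine ⟨hT.isSymmetric, fun x => ?_⟩
    rw [ContinuousLinearMap.reApplyInnerSelf_apply, inner_re_symm, RCLike.re_to_complex]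
    exact hTpos x
  have hVspec : ∀ s ∈ spectrum ℝ V, (0:ℝ) ≤ s := fun s hs =>
    spectrum_nonneg_of_nonneg hVnn hs
  have hTspec : ∀ s ∈ spectrum ℝ T, (0:ℝ) ≤ s := fun s hs =>
    spectrum_nonneg_of_nonneg hTnn hs
  set c : ℝ := (inner ℂ ψ (V ψ) : ℂ).re with hc
  have hcnn : 0 ≤ c := hVpos ψ
  -- squared sqrt computation for any nonneg selfadjoint A
  have sqrt_sq : ∀ (A : E →L[ℂ] E), IsSelfAdjoint A → (∀ s ∈ spectrum ℝ A, (0:ℝ) ≤ s) →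
      ‖cfc (fun s : ℝ => Real.sqrt (s + 1)) A ψ‖ ^ 2 = (inner ℂ ψ (A ψ) : ℂ).re + 1 := by
    intro A hA hAs
    have hsa : IsSelfAdjoint (cfc (fun s : ℝ => Real.sqrt (s + 1)) A) := cfc_predicate _ A
    rw [gseb_norm_sq _ hsa ψ]
    have hmul : cfc (fun s : ℝ => Real.sqrt (s + 1)) A * cfc (fun s : ℝ => Real.sqrt (s + 1)) A
        = A + algebraMap ℝ (E →L[ℂ] E) 1 := by
      rw [← cfc_mul (fun s : ℝ => Real.sqrt (s + 1)) (fun s : ℝ => Real.sqrt (s + 1)) A]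
      have : cfc (fun s : ℝ => Real.sqrt (s + 1) * Real.sqrt (s + 1)) A
          = cfc (fun s : ℝ => s + 1) A := by
        refine cfc_congr fun s hs => ?_
        have h0 : (0:ℝ) ≤ s + 1 := by have := hAs s hs; linarith
        exact Real.mul_self_sqrt h0
      rw [this, cfc_add_const 1 (fun s : ℝ => s) A, cfc_id' ℝ A]
    rw [hmul]
    simp [ContinuousLinearMap.add_apply, inner_add_right, Algebra.algebraMap_eq_smul_one,
      ContinuousLinearMap.smul_apply, inner_smul_right, hψψ, hψ]
  -- c ≤ lam
  have hclam : c ≤ lam := by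
    have h1 := hform 1 one_pos ψ
    rw [sqrt_sq V hV hVspec, sqrt_sq T hT hTspec] at h1
    have hTψ : (inner ℂ ψ (T ψ) : ℂ).re = lam := by
      rw [heig, inner_smul_right, hψψ]
      simp
    rw [hTψ] at h1
    linarith
  -- inner ℂ products with affine combinations
  have inner_affine : ∀ a b : ℝ,
      (inner ℂ ψ ((algebraMap ℝ (E →L[ℂ] E) a + b • V) ψ) : ℂ).re = a + b * c := by
    intro a b
    have e1 : (algebraMap ℝ (E →L[ℂ] E) a) ψ = ((a : ℂ)) • ψ := by
      rw [Algebra.algebraMap_eq_smul_one, ContinuousLinearMap.smul_apply,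
        ContinuousLinearMap.one_apply, ← algebraMap_smul ℂ a ψ, Complex.coe_algebraMap]
    have e2 : (b • V) ψ = ((b : ℂ)) • V ψ := by
      rw [ContinuousLinearMap.smul_apply, ← algebraMap_smul ℂ b (V ψ),
        Complex.coe_algebraMap]
    rw [ContinuousLinearMap.add_apply, inner_add_right, e1, e2, inner_smul_right,
      inner_smul_right, hψψ, Complex.add_re, mul_one, Complex.ofReal_re,
      Complex.mul_re, Complex.ofReal_re, Complex.ofReal_im, hc]
    ring
  constructor
  · -- lower bound
    set a : ℝ := Real.exp (-t * c) * (1 + t * c) with ha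
    set b : ℝ := -t * Real.exp (-t * c) with hb
    have haff : cfc (fun s : ℝ => a + b * s) V = algebraMap ℝ (E →L[ℂ] E) a + b • V := by
      rw [cfc_const_add a (fun s : ℝ => b * s) V, cfc_const_mul_id b V]
    have hle : cfc (fun s : ℝ => a + b * s) V ≤ cfc (fun s : ℝ => Real.exp (-t * s)) V := by
      refine cfc_mono fun s _ => ?_
      have key : (-t * (s - c)) + 1 ≤ Real.exp (-t * (s - c)) :=
        Real.add_one_le_exp (-t * (s - c))
      have hpos : (0:ℝ) < Real.exp (-t * c) := Real.exp_pos _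
      have := mul_le_mul_of_nonneg_left key hpos.le
      calc a + b * s = Real.exp (-t * c) * ((-t * (s - c)) + 1) := by ring
        _ ≤ Real.exp (-t * c) * Real.exp (-t * (s - c)) := this
        _ = Real.exp (-t * s) := by rw [← Real.exp_add]; ring_nf
    have := gseb_inner_mono hle ψ
    rw [haff, inner_affine] at this
    have hval : a + b * c = Real.exp (-t * c) := by rw [ha, hb]; ring
    rw [hval] at this
    have hexp : Real.exp (-t * lam) ≤ Real.exp (-t * c) := by
      apply Real.exp_le_exp.mpr
      nlinarith
    linarith
  · -- upper bound
    have hle : cfc (fun s : ℝ => Real.exp (-t * s)) V ≤ 1 := by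
      refine cfc_le_one _ _ fun s hs => ?_
      have := hVspec s hs
      calc Real.exp (-t * s) ≤ Real.exp 0 := Real.exp_le_exp.mpr (by nlinarith)
        _ = 1 := Real.exp_zero
    have := gseb_inner_mono hle ψ
    simpa [ContinuousLinearMap.one_apply, hψψ, hψ] using this
end

section
/- Let μ be a regular Borel probability measure on a smooth manifold X with Poisson bracket {·,·}, and suppose ∫_X {h, a} dμ = 0 and −i ∫_X ā {h, a} dμ ≥ 0 for all a ∈ C_c^∞(X), where h ∈ C^∞(X) is real-valued. Then ∫_X f {h, g} dμ = 0 for all real-valued f, g ∈ C_c^∞(X). -/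
open MeasureTheory ComplexOrder

/-- Abstract ground-state condition for a classical dynamical system: `𝒟` models the
real-valued functions in `C_c^∞(X)`, `L a` models the Poisson bracket `{h, a}`, which is
linear and satisfies the Leibniz rule. If `∫ {h,a} dμ = 0` and
`−i ∫ ā {h,a} dμ ≥ 0` (with `a = f + ig`) for all `f, g ∈ 𝒟`, then
`∫ f {h,g} dμ = 0` for all real `f, g ∈ 𝒟`. -/
theorem poisson_ground_state_vanishing
    {X : Type*} [TopologicalSpace X] [MeasurableSpace X] [BorelSpace X]
    (μ : Measure X) [IsProbabilityMeasure μ] (hreg : μ.Regular)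
    (𝒟 : Set (X → ℝ))
    (hmul : ∀ f ∈ 𝒟, ∀ g ∈ 𝒟, f * g ∈ 𝒟)
    (hneg : ∀ f ∈ 𝒟, -f ∈ 𝒟)
    (L : (X → ℝ) → (X → ℝ))
    (hLlin : IsLinearMap ℝ L)
    (hLeib : ∀ f ∈ 𝒟, ∀ g ∈ 𝒟, L (f * g) = f * L g + g * L f)
    (hintL : ∀ f ∈ 𝒟, Integrable (L f) μ)
    (hint : ∀ f ∈ 𝒟, ∀ g ∈ 𝒟, Integrable (fun x => f x * L g x) μ)
    (hinv : ∀ f ∈ 𝒟, ∫ x, L f x ∂μ = 0)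
    (hpos : ∀ f ∈ 𝒟, ∀ g ∈ 𝒟,
      0 ≤ -Complex.I * ∫ x, ((f x : ℂ) - Complex.I * (g x : ℂ)) *
        ((L f x : ℂ) + Complex.I * (L g x : ℂ)) ∂μ) :
    ∀ f ∈ 𝒟, ∀ g ∈ 𝒟, ∫ x, f x * L g x ∂μ = 0 := by

  have key : ∀ f ∈ 𝒟, ∀ g ∈ 𝒟,
      0 ≤ ∫ x, f x * L g x ∂μ - ∫ x, g x * L f x ∂μ := by
    intro f hf g hg
    have hfLg := hint f hf g hg
    have hgLf := hint g hg f hf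
    have hfLf := hint f hf f hf
    have hgLg := hint g hg g hg
    have heq : (fun x => ((f x : ℂ) - Complex.I * (g x : ℂ)) *
        ((L f x : ℂ) + Complex.I * (L g x : ℂ)))
        = fun x => ((f x * L f x + g x * L g x : ℝ) : ℂ)
            + ((f x * L g x - g x * L f x : ℝ) : ℂ) * Complex.I := by
      funext x
      push_cast
      linear_combination (-((g x : ℂ) * (L g x : ℂ))) * Complex.I_sq
    have hint1 : Integrable (fun x => f x * L f x + g x * L g x) μ := hfLf.add hgLg
    have hint2 : Integrable (fun x => f x * L g x - g x * L f x) μ := hfLg.sub hgLf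
    have hval : (∫ x, ((f x : ℂ) - Complex.I * (g x : ℂ)) *
        ((L f x : ℂ) + Complex.I * (L g x : ℂ)) ∂μ)
        = ((∫ x, (f x * L f x + g x * L g x) ∂μ : ℝ) : ℂ)
          + ((∫ x, (f x * L g x - g x * L f x) ∂μ : ℝ) : ℂ) * Complex.I := by
      have hco : ∀ r : X → ℝ, ∫ x, ((r x : ℝ) : ℂ) ∂μ = ((∫ x, r x ∂μ : ℝ) : ℂ) :=
        fun r => integral_ofReal
      rw [heq, integral_add ?_ ?_, integral_mul_const, hco, hco]
      · exact hint1.ofReal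
      · exact hint2.ofReal.mul_const Complex.I
    have h := hpos f hf g hg
    rw [hval] at h
    have hre := (Complex.le_def.mp h).1
    simp only [Complex.zero_re, Complex.mul_re, Complex.neg_re, Complex.I_re,
      Complex.neg_im, Complex.I_im, Complex.add_re, Complex.add_im,
      Complex.ofReal_re, Complex.ofReal_im, Complex.mul_im] at hre
    have hB : 0 ≤ ∫ x, (f x * L g x - g x * L f x) ∂μ := by nlinarith [hre]
    rw [integral_sub hfLg hgLf] at hB
    linarith
  intro f hf g hg
  have h1 := key f hf g hg
  have h2 := key (-f) (hneg f hf) g hg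
  have hLnf : L (-f) = -(L f) := hLlin.map_neg f
  have e1 : ∫ x, (-f) x * L g x ∂μ = -∫ x, f x * L g x ∂μ := by
    rw [← integral_neg]; congr 1; funext x; simp [Pi.neg_apply]
  have e2 : ∫ x, g x * L (-f) x ∂μ = -∫ x, g x * L f x ∂μ := by
    rw [← integral_neg]; congr 1; funext x; rw [hLnf]; simp [Pi.neg_apply]
  rw [e1, e2] at h2
  have hsum : ∫ x, f x * L g x ∂μ + ∫ x, g x * L f x ∂μ = 0 := by
    have h0 := hinv (f * g) (hmul f hf g hg)
    rw [hLeib f hf g hg] at h0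
    have : ∫ x, (f x * L g x + g x * L f x) ∂μ = 0 := by
      simpa [Pi.add_apply, Pi.mul_apply] using h0
    rwa [integral_add (hint f hf g hg) (hint g hg f hf)] at this
  linarith
end
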